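/- Let ρ and σ be density matrices on M_n(ℂ) with ρ ⊑ σ in the QPE order. Then ρ⁺ ≤ σ⁺, and if moreover ρ⁺ = σ⁺ then ρ = σ. -/

import Mathlib

open Matrix
open scoped ComplexOrder

/-- The largest eigenvalue of a matrix (for a positive semidefinite matrix this
equals the operator norm). -/
noncomputable def maxEig {m : Type*} [Fintype m] (A : Matrix m m ℂ) : ℝ :=
  sSup {a : ℝ | ∃ v : m → ℂ, v ≠ 0 ∧ A.mulVec v = (a : ℂ) • v}

/-- A density matrix: positive semidefinite with trace 1. -/
def IsDensity {m : Type*} [Fintype m] (ρ : Matrix m m ℂ) : Prop :=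
  ρ.PosSemidef ∧ ρ.trace = 1

/-- The quantum positive evidence (QPE) order: ρ ⊑ σ iff σ⁺•ρ - ρ⁺•σ ≥ 0. -/
def QPE {m : Type*} [Fintype m] (ρ σ : Matrix m m ℂ) : Prop :=
  (maxEig σ • ρ - maxEig ρ • σ).PosSemidef

lemma eigenSet_eq {m : Type*} [Fintype m] [DecidableEq m] {A : Matrix m m ℂ}
    (hA : A.IsHermitian) :
    {a : ℝ | ∃ v : m → ℂ, v ≠ 0 ∧ A.mulVec v = (a : ℂ) • v} = Set.range hA.eigenvalues := by
  ext a
  constructor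
  · rintro ⟨v, hv, hAv⟩
    set U := (hA.eigenvectorUnitary : Matrix m m ℂ) with hU
    set w := star U *ᵥ v with hw
    have hUw : U *ᵥ w = v := by
      rw [hw, mulVec_mulVec, Matrix.mem_unitaryGroup_iff.mp hA.eigenvectorUnitary.2, one_mulVec]
    have hwne : w ≠ 0 := by
      intro h0
      apply hv
      rw [← hUw, h0, mulVec_zero]
    have hdiag : diagonal (RCLike.ofReal ∘ hA.eigenvalues) *ᵥ w = (a : ℂ) • w := by
      have h1 : A *ᵥ v = U *ᵥ (diagonal (RCLike.ofReal ∘ hA.eigenvalues) *ᵥ w) := by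
        conv_lhs => rw [hA.spectral_theorem]
        rw [Unitary.conjStarAlgAut_apply, ← mulVec_mulVec, ← mulVec_mulVec, hw]
      have h2 : star U *ᵥ (A *ᵥ v) = diagonal (RCLike.ofReal ∘ hA.eigenvalues) *ᵥ w := by
        rw [h1, mulVec_mulVec, mulVec_mulVec,
          Matrix.mem_unitaryGroup_iff'.mp hA.eigenvectorUnitary.2, one_mul]
      rw [← h2, hAv, mulVec_smul, hw]
    obtain ⟨i, hi⟩ := Function.ne_iff.mp hwne
    have := congrFun hdiag i
    rw [mulVec_diagonal] at this
    have : (hA.eigenvalues i : ℂ) = a := by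
      have h3 : (hA.eigenvalues i : ℂ) * w i = (a : ℂ) * w i := by
        simpa using this
      exact mul_right_cancel₀ hi h3
    exact ⟨i, by exact_mod_cast this⟩
  · rintro ⟨i, rfl⟩
    refine ⟨⇑(hA.eigenvectorBasis i), (WithLp.ofLp_eq_zero 2).ne.2 <| hA.eigenvectorBasis.orthonormal.ne_zero i, ?_⟩
    have := hA.mulVec_eigenvectorBasis i
    rw [this]
    ext j
    simp [Complex.real_smul]

lemma eig_le_maxEig {m : Type*} [Fintype m] [DecidableEq m] {A : Matrix m m ℂ}
    (hA : A.IsHermitian) (i : m) : hA.eigenvalues i ≤ maxEig A := by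
  have hbdd : BddAbove {a : ℝ | ∃ v : m → ℂ, v ≠ 0 ∧ A.mulVec v = (a : ℂ) • v} := by
    rw [eigenSet_eq hA]
    exact (Set.finite_range _).bddAbove
  apply le_csSup hbdd
  rw [eigenSet_eq hA]
  exact ⟨i, rfl⟩

lemma trace_eq_sum_eig {m : Type*} [Fintype m] [DecidableEq m] {A : Matrix m m ℂ}
    (hA : A.IsHermitian) : A.trace = ((∑ i, hA.eigenvalues i : ℝ) : ℂ) := by
  conv_lhs => rw [hA.spectral_theorem]
  rw [Unitary.conjStarAlgAut_apply, Matrix.trace_mul_cycle,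
    Matrix.mem_unitaryGroup_iff'.mp hA.eigenvectorUnitary.2, one_mul, trace_diagonal]
  push_cast
  rfl

lemma psd_trace_zero {m : Type*} [Fintype m] [DecidableEq m] {A : Matrix m m ℂ}
    (hA : A.PosSemidef) (ht : A.trace = 0) : A = 0 := by
  have hsum : ∑ i, hA.1.eigenvalues i = 0 := by
    have := trace_eq_sum_eig hA.1
    rw [ht] at this
    exact_mod_cast this.symm
  have hz : ∀ i, hA.1.eigenvalues i = 0 := by
    intro i
    have := (Finset.sum_eq_zero_iff_of_nonneg (fun j _ => hA.eigenvalues_nonneg j)).mp hsum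
    exact this i (Finset.mem_univ i)
  have hdz : (RCLike.ofReal ∘ hA.1.eigenvalues : m → ℂ) = 0 := by
    ext i
    simp [hz i]
  conv_lhs => rw [hA.1.spectral_theorem]
  rw [hdz]
  have hd0 : Matrix.diagonal (0 : m → ℂ) = 0 := Matrix.diagonal_zero
  rw [hd0, Unitary.conjStarAlgAut_apply, Matrix.mul_zero, Matrix.zero_mul]

lemma maxEig_pos {m : Type*} [Fintype m] [DecidableEq m] {A : Matrix m m ℂ}
    (hA : IsDensity A) : 0 < maxEig A := by
  have hH := hA.1.1
  have hsum : ∑ i, hH.eigenvalues i = 1 := by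
    have := trace_eq_sum_eig hH
    rw [hA.2] at this
    exact_mod_cast this.symm
  have : ∃ i, 0 < hH.eigenvalues i := by
    by_contra hc
    push_neg at hc
    have : ∑ i, hH.eigenvalues i ≤ 0 := Finset.sum_nonpos (fun i _ => hc i)
    linarith
  obtain ⟨i, hi⟩ := this
  exact lt_of_lt_of_le hi (eig_le_maxEig hH i)

theorem stmt0 {n : ℕ} (ρ σ : Matrix (Fin n) (Fin n) ℂ)
    (hρ : IsDensity ρ) (hσ : IsDensity σ) (h : QPE ρ σ) :
    maxEig ρ ≤ maxEig σ ∧ (maxEig ρ = maxEig σ → ρ = σ) := by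
  have htr : (maxEig σ • ρ - maxEig ρ • σ).trace = ((maxEig σ - maxEig ρ : ℝ) : ℂ) := by
    rw [trace_sub, trace_smul, trace_smul, hρ.2, hσ.2]
    push_cast
    simp [Complex.real_smul]
  constructor
  · have h1 := trace_eq_sum_eig h.1
    rw [htr] at h1
    have h2 : (0:ℝ) ≤ ∑ i, h.1.eigenvalues i :=
      Finset.sum_nonneg (fun i _ => h.eigenvalues_nonneg i)
    have h3 : (maxEig σ - maxEig ρ : ℝ) = ∑ i, h.1.eigenvalues i := by exact_mod_cast h1
    linarith
  · intro heq
    have hM : maxEig σ • ρ - maxEig ρ • σ = 0 := by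
      apply psd_trace_zero h
      rw [htr, heq]
      simp
    rw [heq] at hM
    have : maxEig σ • (ρ - σ) = 0 := by
      rw [smul_sub]
      exact hM
    rcases smul_eq_zero.mp this with h0 | h0
    · have := maxEig_pos hσ
      rw [h0] at this
      exact absurd this (lt_irrefl 0)
    · exact sub_eq_zero.mp h0
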